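/- For integers n ≥ 2, N with n + 2 ≤ N, and any 1 ≤ l < m ≤ N, the quantity λ = Σ_{1 ≤ i < j ≤ n+2} [ (i-1)(n+2-j)/C(n+2,4) ] * [ C(l-1,i-1) C(m-l-1,j-i-1) C(N-m,n+2-j) / C(N,n+2) ] satisfies λ ≤ 24 / N^2. -/

import Mathlib

open Finset

private lemma vand (x y k : ℕ) :
    ∑ a ∈ range (k + 1), x.choose a * y.choose (k - a) = (x + y).choose k := by
  rw [Nat.add_choose_eq, Finset.Nat.sum_antidiagonal_eq_sum_range_succ_mk]

private lemma key (N n l m : ℕ) (hl : 1 ≤ l) (hlm : l < m) (hm : m ≤ N) :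
    ∑ i ∈ Icc 1 (n + 2), ∑ j ∈ Icc (i + 1) (n + 2),
      (l - 1).choose (i - 1) * ((m - l - 1).choose (j - i - 1) *
        (N - m).choose (n + 2 - j)) = (N - 2).choose n := by
  rw [← Finset.Ico_add_one_right_eq_Icc, Finset.sum_Ico_eq_sum_range]
  have h1 : n + 2 + 1 - 1 = n + 2 := by omega
  rw [h1]
  have h2 : ∀ a ∈ range (n + 2),
      (∑ j ∈ Icc (1 + a + 1) (n + 2), (l - 1).choose (1 + a - 1) *
        ((m - l - 1).choose (j - (1 + a) - 1) * (N - m).choose (n + 2 - j)))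
      = (l - 1).choose a *
        ∑ b ∈ range (n + 1 - a), (m - l - 1).choose b * (N - m).choose (n - a - b) := by
    intro a ha
    rw [← Finset.Ico_add_one_right_eq_Icc, Finset.sum_Ico_eq_sum_range, Finset.mul_sum]
    have h3 : n + 2 + 1 - (1 + a + 1) = n + 1 - a := by omega
    rw [h3]
    refine Finset.sum_congr rfl fun b hb => ?_
    simp only [mem_range] at hb
    have e1 : 1 + a - 1 = a := by omega
    have e2 : 1 + a + 1 + b - (1 + a) - 1 = b := by omega
    have e3 : n + 2 - (1 + a + 1 + b) = n - a - b := by omega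
    rw [e1, e2, e3]
  rw [Finset.sum_congr rfl h2, Finset.sum_range_succ]
  have h4 : n + 1 - (n + 1) = 0 := by omega
  rw [h4]
  simp only [range_zero, sum_empty, mul_zero, add_zero]
  have h5 : ∀ a ∈ range (n + 1),
      (l - 1).choose a *
        ∑ b ∈ range (n + 1 - a), (m - l - 1).choose b * (N - m).choose (n - a - b)
      = (l - 1).choose a * (m - l - 1 + (N - m)).choose (n - a) := by
    intro a ha
    simp only [mem_range] at ha
    have h6 : n + 1 - a = (n - a) + 1 := by omega
    rw [h6]
    congr 1
    exact vand (m - l - 1) (N - m) (n - a)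
  rw [Finset.sum_congr rfl h5, vand]
  congr 1
  omega

private lemma ratio (N n : ℕ) (hnN : n + 2 ≤ N) :
    (n + 2) * ((n + 1) * Nat.choose N (n + 2)) =
      N * ((N - 1) * Nat.choose (N - 2) n) := by
  obtain ⟨M, rfl⟩ : ∃ M, N = M + 2 := ⟨N - 2, by omega⟩
  have e1 : M + 2 - 2 = M := by omega
  have e2 : M + 2 - 1 = M + 1 := by omega
  rw [e1, e2]
  have h1 := Nat.add_one_mul_choose_eq M n
  have h2 := Nat.add_one_mul_choose_eq (M + 1) (n + 1)
  nlinarith [h1, h2]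

private lemma c4 (n : ℕ) (hn : 2 ≤ n) :
    24 * Nat.choose (n + 2) 4 = (n + 2) * ((n + 1) * (n * (n - 1))) := by
  obtain ⟨k, rfl⟩ : ∃ k, n = k + 2 := ⟨n - 2, by omega⟩
  have h := Nat.descFactorial_eq_factorial_mul_choose (k + 4) 4
  have e : k + 2 - 1 = k + 1 := by omega
  have e2 : k + 2 + 2 = k + 4 := by omega
  rw [e2, e]
  have h24 : (24 : ℕ) = Nat.factorial 4 := by decide
  rw [h24, ← h]
  simp [Nat.descFactorial]
  ring

/-- `λ_{2;lm} = ∑_{1 ≤ i < j ≤ n+2} p_{2;ij} p_{2;ijlm} ≤ 24/N²`. -/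
theorem stmt_17 (N n l m : ℕ) (hn : 2 ≤ n) (hnN : n + 2 ≤ N)
    (hl : 1 ≤ l) (hlm : l < m) (hm : m ≤ N) :
    ∑ i ∈ Icc 1 (n + 2), ∑ j ∈ Icc (i + 1) (n + 2),
        (((i : ℝ) - 1) * ((n : ℝ) + 2 - j) / Nat.choose (n + 2) 4)
          * ((Nat.choose (l - 1) (i - 1) : ℝ) * Nat.choose (m - l - 1) (j - i - 1)
              * Nat.choose (N - m) (n + 2 - j) / Nat.choose N (n + 2))
      ≤ 24 / (N : ℝ) ^ 2 := by
  have hC4 : 0 < (Nat.choose (n + 2) 4 : ℝ) := by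
    exact_mod_cast Nat.choose_pos (by omega)
  have hCN : 0 < (Nat.choose N (n + 2) : ℝ) := by
    exact_mod_cast Nat.choose_pos hnN
  set A : ℝ := (n : ℝ) ^ 2 / 4 / Nat.choose (n + 2) 4 with hA
  have step1 : ∑ i ∈ Icc 1 (n + 2), ∑ j ∈ Icc (i + 1) (n + 2),
        (((i : ℝ) - 1) * ((n : ℝ) + 2 - j) / Nat.choose (n + 2) 4)
          * ((Nat.choose (l - 1) (i - 1) : ℝ) * Nat.choose (m - l - 1) (j - i - 1)
              * Nat.choose (N - m) (n + 2 - j) / Nat.choose N (n + 2))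
      ≤ ∑ i ∈ Icc 1 (n + 2), ∑ j ∈ Icc (i + 1) (n + 2),
        A * ((Nat.choose (l - 1) (i - 1) : ℝ) * Nat.choose (m - l - 1) (j - i - 1)
              * Nat.choose (N - m) (n + 2 - j) / Nat.choose N (n + 2)) := by
    refine Finset.sum_le_sum fun i hi => Finset.sum_le_sum fun j hj => ?_
    have hq : (0:ℝ) ≤ (Nat.choose (l - 1) (i - 1) : ℝ) * Nat.choose (m - l - 1) (j - i - 1)
              * Nat.choose (N - m) (n + 2 - j) / Nat.choose N (n + 2) := by positivity
    refine mul_le_mul_of_nonneg_right ?_ hq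
    rw [hA]
    gcongr
    simp only [mem_Icc] at hi hj
    have h1 : (1:ℝ) ≤ (i:ℝ) := by exact_mod_cast hi.1
    have h2 : (j:ℝ) ≤ (n:ℝ) + 2 := by exact_mod_cast hj.2
    have h3 : (i:ℝ) + 1 ≤ (j:ℝ) := by exact_mod_cast hj.1
    have hs : ((i:ℝ) - 1) + ((n:ℝ) + 2 - j) ≤ (n:ℝ) := by linarith
    nlinarith [sq_nonneg (((i:ℝ) - 1) - ((n:ℝ) + 2 - j))]
  refine step1.trans ?_
  have step2 : ∑ i ∈ Icc 1 (n + 2), ∑ j ∈ Icc (i + 1) (n + 2),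
        A * ((Nat.choose (l - 1) (i - 1) : ℝ) * Nat.choose (m - l - 1) (j - i - 1)
              * Nat.choose (N - m) (n + 2 - j) / Nat.choose N (n + 2))
      = A * ((Nat.choose (N - 2) n : ℝ) / Nat.choose N (n + 2)) := by
    simp only [← Finset.mul_sum]
    congr 1
    simp only [← Finset.sum_div]
    congr 1
    rw [← key N n l m hl hlm hm]
    push_cast
    exact Finset.sum_congr rfl fun i _ => Finset.sum_congr rfl fun j _ => by ring
  rw [step2]
  -- final inequality
  have hid1 : ((n:ℝ) + 2) * (((n:ℝ) + 1) * (Nat.choose N (n + 2) : ℝ))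
      = (N:ℝ) * (((N:ℝ) - 1) * (Nat.choose (N - 2) n : ℝ)) := by
    have h := congrArg (fun t : ℕ => (t : ℝ)) (ratio N n hnN)
    simp only [Nat.cast_mul] at h
    have e : ((N - 1 : ℕ) : ℝ) = (N:ℝ) - 1 := by
      rw [Nat.cast_sub (by omega)]; norm_num
    rw [e] at h
    push_cast at h
    linarith [h]
  have hid2 : (24:ℝ) * (Nat.choose (n + 2) 4 : ℝ)
      = ((n:ℝ) + 2) * (((n:ℝ) + 1) * ((n:ℝ) * ((n:ℝ) - 1))) := by
    have h := congrArg (fun t : ℕ => (t : ℝ)) (c4 n hn)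
    simp only [Nat.cast_mul] at h
    have e : ((n - 1 : ℕ) : ℝ) = (n:ℝ) - 1 := by
      rw [Nat.cast_sub (by omega)]; norm_num
    rw [e] at h
    push_cast at h
    linarith [h]
  have hNpos : (0:ℝ) < (N:ℝ) := by exact_mod_cast (by omega : 0 < N)
  have hn' : (2:ℝ) ≤ (n:ℝ) := by exact_mod_cast hn
  have hN' : (4:ℝ) ≤ (N:ℝ) := by exact_mod_cast (by omega : 4 ≤ N)
  have hfin : (n:ℝ) * (N:ℝ) ≤ 4 * ((n:ℝ) - 1) * ((N:ℝ) - 1) := by nlinarith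
  set a : ℝ := (Nat.choose (N - 2) n : ℝ) with ha
  set b : ℝ := (Nat.choose N (n + 2) : ℝ) with hb
  set c : ℝ := (Nat.choose (n + 2) 4 : ℝ) with hc
  have hcomb : 96 * c * b * ((n:ℝ) + 2) * ((n:ℝ) + 1)
      = 4 * ((n:ℝ) + 2) * ((n:ℝ) + 1) * (n:ℝ) * ((n:ℝ) - 1) * (N:ℝ) * ((N:ℝ) - 1) * a := by
    linear_combination (4 * (((n:ℝ) + 2) * (((n:ℝ) + 1) * b))) * hid2
      + (4 * (((n:ℝ) + 2) * (((n:ℝ) + 1) * ((n:ℝ) * ((n:ℝ) - 1))))) * hid1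
  have ha0 : (0:ℝ) ≤ a := by rw [ha]; positivity
  have hgoal : (n:ℝ) ^ 2 * a * (N:ℝ) ^ 2 ≤ 96 * c * b := by
    have hp : (0:ℝ) < ((n:ℝ) + 2) * ((n:ℝ) + 1) := by positivity
    rw [← mul_le_mul_iff_of_pos_right hp]
    calc (n:ℝ) ^ 2 * a * (N:ℝ) ^ 2 * (((n:ℝ) + 2) * ((n:ℝ) + 1))
        ≤ 4 * ((n:ℝ) + 2) * ((n:ℝ) + 1) * (n:ℝ) * ((n:ℝ) - 1) * (N:ℝ) * ((N:ℝ) - 1) * a := by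
          nlinarith [mul_le_mul_of_nonneg_left hfin
            (mul_nonneg (mul_nonneg (by positivity : (0:ℝ) ≤ ((n:ℝ) + 2) * ((n:ℝ) + 1)) ha0)
              (by positivity : (0:ℝ) ≤ (n:ℝ) * (N:ℝ)))]
      _ = 96 * c * b * ((n:ℝ) + 2) * ((n:ℝ) + 1) := hcomb.symm
      _ = 96 * c * b * (((n:ℝ) + 2) * ((n:ℝ) + 1)) := by ring
  rw [hA, div_div, div_mul_div_comm, div_le_div_iff₀ (by positivity) (pow_pos hNpos 2)]
  nlinarith [hgoal]
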